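/- Let ρ: L^∞ → ℝ be strongly 𝓖-law invariant, i.e., ρ(Z+X) = ρ(Z+Y) for all Z ∈ L^∞ with 𝔼[Z|𝓖] = 0 and all 𝓖-measurable X,Y ∈ L^∞ with the same distribution under ℙ. Then ρ(X) = ρ(X − 𝔼[X|𝓖] + Y) for all X ∈ L^∞ and 𝓖-measurable Y ∈ L^∞ with Y identically distributed as 𝔼[X|𝓖]; and conversely, this latter property implies strong 𝓖-law invariance. -/

import Mathlib

open MeasureTheory

lemma aux_integrable {Ω : Type*} {mΩ : MeasurableSpace Ω} {ℙ : Measure Ω}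
    [IsProbabilityMeasure ℙ] {X : Ω → ℝ} (hX : AEStronglyMeasurable X ℙ)
    (hb : ∃ C : ℝ, ∀ᵐ ω ∂ℙ, |X ω| ≤ C) : Integrable X ℙ := by
  obtain ⟨C, hC⟩ := hb
  exact Integrable.mono' (integrable_const C) hX hC

/-- ρ is strongly 𝓖-law invariant if and only if
ρ(X) = ρ(X − 𝔼[X|𝓖] + Y) for all X ∈ L^∞ and 𝓖-measurable Y ∈ L^∞ with Y identically
distributed as 𝔼[X|𝓖]. -/
theorem stmt_12 {Ω : Type*} (m : MeasurableSpace Ω) {mΩ : MeasurableSpace Ω} (hm : m ≤ mΩ)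
    (ℙ : Measure Ω) [IsProbabilityMeasure ℙ] (ρ : (Ω → ℝ) → ℝ)
    (hae : ∀ X Y : Ω → ℝ, X =ᵐ[ℙ] Y → ρ X = ρ Y) :
    (∀ Z X Y : Ω → ℝ, Measurable Z → (∃ C : ℝ, ∀ᵐ ω ∂ℙ, |Z ω| ≤ C) →
        (ℙ[Z|m]) =ᵐ[ℙ] 0 →
        StronglyMeasurable[m] X → (∃ C : ℝ, ∀ᵐ ω ∂ℙ, |X ω| ≤ C) →
        StronglyMeasurable[m] Y → (∃ C : ℝ, ∀ᵐ ω ∂ℙ, |Y ω| ≤ C) →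
        Measure.map X ℙ = Measure.map Y ℙ → ρ (Z + X) = ρ (Z + Y))
    ↔ (∀ X Y : Ω → ℝ, Measurable X → (∃ C : ℝ, ∀ᵐ ω ∂ℙ, |X ω| ≤ C) →
        StronglyMeasurable[m] Y → (∃ C : ℝ, ∀ᵐ ω ∂ℙ, |Y ω| ≤ C) →
        Measure.map Y ℙ = Measure.map (ℙ[X|m]) ℙ →
        ρ X = ρ (fun ω => X ω - (ℙ[X|m]) ω + Y ω)) := by
  haveI : SigmaFinite (ℙ.trim hm) := by
    have : IsFiniteMeasure (ℙ.trim hm) := isFiniteMeasure_trim hm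
    infer_instance
  constructor
  · intro h X Y hXm ⟨C, hC⟩ hYm hYb hmap
    have hXint : Integrable X ℙ := aux_integrable hXm.aestronglyMeasurable ⟨C, hC⟩
    set E := ℙ[X|m] with hE
    have hEm : StronglyMeasurable[m] E := stronglyMeasurable_condExp
    have hEmeas : Measurable E := (hEm.measurable).mono hm le_rfl
    have hEb : ∀ᵐ ω ∂ℙ, |E ω| ≤ C := by
      have h1 : E ≤ᵐ[ℙ] fun _ => C := by
        have := condExp_mono (m := m) hXint (integrable_const C)
          (Filter.Eventually.mono hC fun ω h => (abs_le.mp h).2)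
        simpa [condExp_const hm] using this
      have h2 : (fun _ : Ω => -C) ≤ᵐ[ℙ] E := by
        have := condExp_mono (m := m) (integrable_const (-C)) hXint
          (Filter.Eventually.mono hC fun ω h => (abs_le.mp h).1)
        simpa [condExp_const hm] using this
      filter_upwards [h1, h2] with ω h1 h2
      exact abs_le.mpr ⟨h2, h1⟩
    set Z : Ω → ℝ := X - E with hZ
    have hZmeas : Measurable Z := hXm.sub hEmeas
    have hZb : ∃ D : ℝ, ∀ᵐ ω ∂ℙ, |Z ω| ≤ D := by
      refine ⟨C + C, ?_⟩
      filter_upwards [hC, hEb] with ω h1 h2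
      calc |X ω - E ω| ≤ |X ω| + |E ω| := abs_sub _ _
        _ ≤ C + C := add_le_add h1 h2
    have hZcond : (ℙ[Z|m]) =ᵐ[ℙ] 0 := by
      have hEint : Integrable E ℙ := integrable_condExp
      have h1 : (ℙ[Z|m]) =ᵐ[ℙ] ℙ[X|m] - ℙ[E|m] := condExp_sub hXint hEint m
      have h2 : ℙ[E|m] =ᵐ[ℙ] E := by
        rw [condExp_of_stronglyMeasurable hm hEm hEint]
      filter_upwards [h1, h2] with ω h1 h2
      rw [h1, Pi.sub_apply, h2, hE, sub_self, Pi.zero_apply]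
    have hkey := h Z E Y hZmeas hZb hZcond hEm ⟨C, hEb⟩ hYm hYb hmap.symm
    have e1 : ρ X = ρ (Z + E) := hae _ _ (Filter.Eventually.of_forall fun ω => by simp [hZ])
    have e2 : ρ (Z + Y) = ρ (fun ω => X ω - E ω + Y ω) :=
      hae _ _ (Filter.Eventually.of_forall fun ω => by simp [hZ])
    rw [e1, hkey, e2]
  · intro h Z X Y hZmeas hZb hZcond hXm hXb hYm hYb hmap
    have hXmeas : Measurable X := hXm.measurable.mono hm le_rfl
    have hZint : Integrable Z ℙ := aux_integrable hZmeas.aestronglyMeasurable hZb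
    have hXint : Integrable X ℙ := aux_integrable (hXmeas.aestronglyMeasurable) hXb
    have hWmeas : Measurable (Z + X) := hZmeas.add hXmeas
    have hWb : ∃ D : ℝ, ∀ᵐ ω ∂ℙ, |(Z + X) ω| ≤ D := by
      obtain ⟨C1, hC1⟩ := hZb; obtain ⟨C2, hC2⟩ := hXb
      refine ⟨C1 + C2, ?_⟩
      filter_upwards [hC1, hC2] with ω h1 h2
      calc |Z ω + X ω| ≤ |Z ω| + |X ω| := abs_add_le _ _
        _ ≤ C1 + C2 := add_le_add h1 h2
    have hcond : ℙ[Z + X|m] =ᵐ[ℙ] X := by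
      have h1 : ℙ[Z + X|m] =ᵐ[ℙ] ℙ[Z|m] + ℙ[X|m] := condExp_add hZint hXint m
      have h2 : ℙ[X|m] =ᵐ[ℙ] X := by
        rw [condExp_of_stronglyMeasurable hm hXm hXint]
      filter_upwards [h1, h2, hZcond] with ω h1 h2 h3
      simp [h1, h2, h3]
    have hmap2 : Measure.map Y ℙ = Measure.map (ℙ[Z + X|m]) ℙ := by
      rw [hmap.symm, Measure.map_congr hcond.symm]
    have hkey := h (Z + X) Y hWmeas hWb hYm hYb hmap2
    have e2 : ρ (fun ω => (Z + X) ω - (ℙ[Z + X|m]) ω + Y ω) = ρ (Z + Y) := by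
      apply hae
      filter_upwards [hcond] with ω hω
      simp [hω]
    rw [hkey, e2]
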